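/- Let P be a point, and let p_{j−1}, p_j, p_{j+1} be three points on a circle of radius R centered at O. Let q_j and q_{j+1} be the orthogonal projections (feet of perpendiculars) of P onto the lines p_{j−1}p_j and p_j p_{j+1} respectively. Then |q_{j+1} − q_j| = |p_{j−1} − p_{j+1}| · |P − p_j| / (2R). -/

import Mathlib

open EuclideanGeometry

set_option maxHeartbeats 2000000 in
lemma key_poly (t s a1 a2 b1 b2 c1 c2 P1 P2 R : ℝ)
    (ga : a1^2 + a2^2 = R^2) (gb : b1^2 + b2^2 = R^2) (gc : c1^2 + c2^2 = R^2)
    (ht : (P1 - (a1 + t*(b1-a1)))*(b1-a1) + (P2 - (a2 + t*(b2-a2)))*(b2-a2) = 0)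
    (hs : (P1 - (b1 + s*(c1-b1)))*(c1-b1) + (P2 - (b2 + s*(c2-b2)))*(c2-b2) = 0) :
    4*R^2*(((b1 + s*(c1-b1)) - (a1 + t*(b1-a1)))^2 + ((b2 + s*(c2-b2)) - (a2 + t*(b2-a2)))^2)
      * (((b1-a1)^2+(b2-a2)^2) * ((c1-b1)^2+(c2-b2)^2))
    = ((c1-a1)^2+(c2-a2)^2) * ((P1-b1)^2+(P2-b2)^2)
      * (((b1-a1)^2+(b2-a2)^2) * ((c1-b1)^2+(c2-b2)^2)) := by
  linear_combination ((0-4:ℝ)*t*a1^2*b1^2*R^2 + (8:ℝ)*t*a1^2*b1*c1*R^2 - (4:ℝ)*t*a1^2*b2^2*R^2 + (8:ℝ)*t*a1^2*b2*c2*R^2 - (4:ℝ)*t*a1^2*c1^2*R^2 - (4:ℝ)*t*a1^2*c2^2*R^2 + (8:ℝ)*t*a1*b1^3*R^2 - (16:ℝ)*t*a1*b1^2*c1*R^2 + (8:ℝ)*t*a1*b1*b2^2*R^2 - (16:ℝ)*t*a1*b1*b2*c2*R^2 + (8:ℝ)*t*a1*b1*c1^2*R^2 + (8:ℝ)*t*a1*b1*c2^2*R^2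 - (4:ℝ)*t*a2^2*b1^2*R^2 + (8:ℝ)*t*a2^2*b1*c1*R^2 - (4:ℝ)*t*a2^2*b2^2*R^2 + (8:ℝ)*t*a2^2*b2*c2*R^2 - (4:ℝ)*t*a2^2*c1^2*R^2 - (4:ℝ)*t*a2^2*c2^2*R^2 + (8:ℝ)*t*a2*b1^2*b2*R^2 - (16:ℝ)*t*a2*b1*b2*c1*R^2 + (8:ℝ)*t*a2*b2^3*R^2 - (16:ℝ)*t*a2*b2^2*c2*R^2 + (8:ℝ)*t*a2*b2*c1^2*R^2 + (8:ℝ)*t*a2*b2*c2^2*R^2 - (4:ℝ)*t*b1^4*R^2 + (8:ℝ)*t*b1^3*c1*R^2 - (8:ℝ)*t*b1^2*b2^2*R^2 + (8:ℝ)*t*b1^2*b2*c2*R^2 - (4:ℝ)*t*b1^2*c1^2*R^2 - (4:ℝ)*t*b1^2*c2^2*R^2 + (8:ℝ)*t*b1*b2^2*c1*R^2 - (4:ℝ)*t*b2^4*R^2 + (8:ℝ)*t*b2^3*c2*R^2 - (4:ℝ)*t*b2^2*c1^2*R^2 - (4:ℝ)*t*b2^2*c2^2*R^2 + (8:ℝ)*s*a1*b1^3*R^2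 - (24:ℝ)*s*a1*b1^2*c1*R^2 + (8:ℝ)*s*a1*b1*b2^2*R^2 - (16:ℝ)*s*a1*b1*b2*c2*R^2 + (24:ℝ)*s*a1*b1*c1^2*R^2 + (8:ℝ)*s*a1*b1*c2^2*R^2 - (8:ℝ)*s*a1*b2^2*c1*R^2 + (16:ℝ)*s*a1*b2*c1*c2*R^2 - (8:ℝ)*s*a1*c1^3*R^2 - (8:ℝ)*s*a1*c1*c2^2*R^2 + (8:ℝ)*s*a2*b1^2*b2*R^2 - (8:ℝ)*s*a2*b1^2*c2*R^2 - (16:ℝ)*s*a2*b1*b2*c1*R^2 + (16:ℝ)*s*a2*b1*c1*c2*R^2 + (8:ℝ)*s*a2*b2^3*R^2 - (24:ℝ)*s*a2*b2^2*c2*R^2 + (8:ℝ)*s*a2*b2*c1^2*R^2 + (24:ℝ)*s*a2*b2*c2^2*R^2 - (8:ℝ)*s*a2*c1^2*c2*R^2 - (8:ℝ)*s*a2*c2^3*R^2 - (8:ℝ)*s*b1^4*R^2 + (24:ℝ)*s*b1^3*c1*R^2 - (16:ℝ)*s*b1^2*b2^2*R^2 + (24:ℝ)*s*b1^2*b2*c2*R^2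 - (24:ℝ)*s*b1^2*c1^2*R^2 - (8:ℝ)*s*b1^2*c2^2*R^2 + (24:ℝ)*s*b1*b2^2*c1*R^2 - (32:ℝ)*s*b1*b2*c1*c2*R^2 + (8:ℝ)*s*b1*c1^3*R^2 + (8:ℝ)*s*b1*c1*c2^2*R^2 - (8:ℝ)*s*b2^4*R^2 + (24:ℝ)*s*b2^3*c2*R^2 - (8:ℝ)*s*b2^2*c1^2*R^2 - (24:ℝ)*s*b2^2*c2^2*R^2 + (8:ℝ)*s*b2*c1^2*c2*R^2 + (8:ℝ)*s*b2*c2^3*R^2 + (4:ℝ)*a1^2*b1^2*R^2 - (8:ℝ)*a1^2*b1*c1*R^2 + (4:ℝ)*a1^2*b2^2*R^2 - (8:ℝ)*a1^2*b2*c2*R^2 + (4:ℝ)*a1^2*c1^2*R^2 + (4:ℝ)*a1^2*c2^2*R^2 - (12:ℝ)*a1*b1^3*R^2 + (24:ℝ)*a1*b1^2*c1*R^2 + (4:ℝ)*a1*b1^2*P1*R^2 - (12:ℝ)*a1*b1*b2^2*R^2 + (24:ℝ)*a1*b1*b2*c2*R^2 - (12:ℝ)*a1*b1*c1^2*R^2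 - (8:ℝ)*a1*b1*c1*P1*R^2 - (12:ℝ)*a1*b1*c2^2*R^2 + (4:ℝ)*a1*b2^2*P1*R^2 - (8:ℝ)*a1*b2*c2*P1*R^2 + (4:ℝ)*a1*c1^2*P1*R^2 + (4:ℝ)*a1*c2^2*P1*R^2 + (4:ℝ)*a2^2*b1^2*R^2 - (8:ℝ)*a2^2*b1*c1*R^2 + (4:ℝ)*a2^2*b2^2*R^2 - (8:ℝ)*a2^2*b2*c2*R^2 + (4:ℝ)*a2^2*c1^2*R^2 + (4:ℝ)*a2^2*c2^2*R^2 - (12:ℝ)*a2*b1^2*b2*R^2 + (4:ℝ)*a2*b1^2*P2*R^2 + (24:ℝ)*a2*b1*b2*c1*R^2 - (8:ℝ)*a2*b1*c1*P2*R^2 - (12:ℝ)*a2*b2^3*R^2 + (24:ℝ)*a2*b2^2*c2*R^2 + (4:ℝ)*a2*b2^2*P2*R^2 - (12:ℝ)*a2*b2*c1^2*R^2 - (12:ℝ)*a2*b2*c2^2*R^2 - (8:ℝ)*a2*b2*c2*P2*R^2 + (4:ℝ)*a2*c1^2*P2*R^2 + (4:ℝ)*a2*c2^2*P2*R^2 +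 (8:ℝ)*b1^4*R^2 - (16:ℝ)*b1^3*c1*R^2 - (4:ℝ)*b1^3*P1*R^2 + (16:ℝ)*b1^2*b2^2*R^2 - (16:ℝ)*b1^2*b2*c2*R^2 - (4:ℝ)*b1^2*b2*P2*R^2 + (8:ℝ)*b1^2*c1^2*R^2 + (8:ℝ)*b1^2*c1*P1*R^2 + (8:ℝ)*b1^2*c2^2*R^2 - (16:ℝ)*b1*b2^2*c1*R^2 - (4:ℝ)*b1*b2^2*P1*R^2 + (8:ℝ)*b1*b2*c1*P2*R^2 + (8:ℝ)*b1*b2*c2*P1*R^2 - (4:ℝ)*b1*c1^2*P1*R^2 - (4:ℝ)*b1*c2^2*P1*R^2 + (8:ℝ)*b2^4*R^2 - (16:ℝ)*b2^3*c2*R^2 - (4:ℝ)*b2^3*P2*R^2 + (8:ℝ)*b2^2*c1^2*R^2 + (8:ℝ)*b2^2*c2^2*R^2 + (8:ℝ)*b2^2*c2*P2*R^2 - (4:ℝ)*b2*c1^2*P2*R^2 - (4:ℝ)*b2*c2^2*P2*R^2) * ht + 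
  ((0-4:ℝ)*s*a1^2*b1^2*R^2 + (8:ℝ)*s*a1^2*b1*c1*R^2 - (4:ℝ)*s*a1^2*b2^2*R^2 + (8:ℝ)*s*a1^2*b2*c2*R^2 - (4:ℝ)*s*a1^2*c1^2*R^2 - (4:ℝ)*s*a1^2*c2^2*R^2 + (8:ℝ)*s*a1*b1^3*R^2 - (16:ℝ)*s*a1*b1^2*c1*R^2 + (8:ℝ)*s*a1*b1*b2^2*R^2 - (16:ℝ)*s*a1*b1*b2*c2*R^2 + (8:ℝ)*s*a1*b1*c1^2*R^2 + (8:ℝ)*s*a1*b1*c2^2*R^2 - (4:ℝ)*s*a2^2*b1^2*R^2 + (8:ℝ)*s*a2^2*b1*c1*R^2 - (4:ℝ)*s*a2^2*b2^2*R^2 + (8:ℝ)*s*a2^2*b2*c2*R^2 - (4:ℝ)*s*a2^2*c1^2*R^2 - (4:ℝ)*s*a2^2*c2^2*R^2 + (8:ℝ)*s*a2*b1^2*b2*R^2 - (16:ℝ)*s*a2*b1*b2*c1*R^2 + (8:ℝ)*s*a2*b2^3*R^2 - (16:ℝ)*s*a2*b2^2*c2*R^2 + (8:ℝ)*s*a2*b2*c1^2*R^2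 + (8:ℝ)*s*a2*b2*c2^2*R^2 - (4:ℝ)*s*b1^4*R^2 + (8:ℝ)*s*b1^3*c1*R^2 - (8:ℝ)*s*b1^2*b2^2*R^2 + (8:ℝ)*s*b1^2*b2*c2*R^2 - (4:ℝ)*s*b1^2*c1^2*R^2 - (4:ℝ)*s*b1^2*c2^2*R^2 + (8:ℝ)*s*b1*b2^2*c1*R^2 - (4:ℝ)*s*b2^4*R^2 + (8:ℝ)*s*b2^3*c2*R^2 - (4:ℝ)*s*b2^2*c1^2*R^2 - (4:ℝ)*s*b2^2*c2^2*R^2 + (4:ℝ)*a1^2*b1^2*R^2 - (4:ℝ)*a1^2*b1*c1*R^2 - (4:ℝ)*a1^2*b1*P1*R^2 - (4:ℝ)*a1^2*b2^2*R^2 + (4:ℝ)*a1^2*b2*c2*R^2 + (4:ℝ)*a1^2*b2*P2*R^2 + (4:ℝ)*a1^2*c1*P1*R^2 - (4:ℝ)*a1^2*c2*P2*R^2 + (16:ℝ)*a1*a2*b1*b2*R^2 - (8:ℝ)*a1*a2*b1*c2*R^2 - (8:ℝ)*a1*a2*b1*P2*R^2 - (8:ℝ)*a1*a2*b2*c1*R^2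 - (8:ℝ)*a1*a2*b2*P1*R^2 + (8:ℝ)*a1*a2*c1*P2*R^2 + (8:ℝ)*a1*a2*c2*P1*R^2 - (8:ℝ)*a1*b1^3*R^2 + (8:ℝ)*a1*b1^2*c1*R^2 + (8:ℝ)*a1*b1^2*P1*R^2 - (8:ℝ)*a1*b1*b2^2*R^2 - (8:ℝ)*a1*b1*c1*P1*R^2 + (8:ℝ)*a1*b1*c2*P2*R^2 + (8:ℝ)*a1*b2^2*c1*R^2 + (8:ℝ)*a1*b2^2*P1*R^2 - (8:ℝ)*a1*b2*c1*P2*R^2 - (8:ℝ)*a1*b2*c2*P1*R^2 - (4:ℝ)*a2^2*b1^2*R^2 + (4:ℝ)*a2^2*b1*c1*R^2 + (4:ℝ)*a2^2*b1*P1*R^2 + (4:ℝ)*a2^2*b2^2*R^2 - (4:ℝ)*a2^2*b2*c2*R^2 - (4:ℝ)*a2^2*b2*P2*R^2 - (4:ℝ)*a2^2*c1*P1*R^2 + (4:ℝ)*a2^2*c2*P2*R^2 - (8:ℝ)*a2*b1^2*b2*R^2 + (8:ℝ)*a2*b1^2*c2*R^2 + (8:ℝ)*a2*b1^2*P2*R^2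 - (8:ℝ)*a2*b1*c1*P2*R^2 - (8:ℝ)*a2*b1*c2*P1*R^2 - (8:ℝ)*a2*b2^3*R^2 + (8:ℝ)*a2*b2^2*c2*R^2 + (8:ℝ)*a2*b2^2*P2*R^2 + (8:ℝ)*a2*b2*c1*P1*R^2 - (8:ℝ)*a2*b2*c2*P2*R^2 + (4:ℝ)*b1^4*R^2 - (4:ℝ)*b1^3*c1*R^2 - (4:ℝ)*b1^3*P1*R^2 + (8:ℝ)*b1^2*b2^2*R^2 - (4:ℝ)*b1^2*b2*c2*R^2 - (4:ℝ)*b1^2*b2*P2*R^2 + (4:ℝ)*b1^2*c1*P1*R^2 - (4:ℝ)*b1^2*c2*P2*R^2 - (4:ℝ)*b1*b2^2*c1*R^2 - (4:ℝ)*b1*b2^2*P1*R^2 + (8:ℝ)*b1*b2*c1*P2*R^2 + (8:ℝ)*b1*b2*c2*P1*R^2 + (4:ℝ)*b2^4*R^2 - (4:ℝ)*b2^3*c2*R^2 - (4:ℝ)*b2^3*P2*R^2 - (4:ℝ)*b2^2*c1*P1*R^2 + (4:ℝ)*b2^2*c2*P2*R^2) * hs + 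
  ((0-1:ℝ)*a1^2*b1^4 + (2:ℝ)*a1^2*b1^3*c1 + (2:ℝ)*a1^2*b1^3*P1 - (2:ℝ)*a1^2*b1^2*b2^2 + (2:ℝ)*a1^2*b1^2*b2*c2 + (2:ℝ)*a1^2*b1^2*b2*P2 - (1:ℝ)*a1^2*b1^2*c1^2 - (4:ℝ)*a1^2*b1^2*c1*P1 - (1:ℝ)*a1^2*b1^2*c2^2 - (1:ℝ)*a1^2*b1^2*P1^2 - (1:ℝ)*a1^2*b1^2*P2^2 + (2:ℝ)*a1^2*b1*b2^2*c1 + (2:ℝ)*a1^2*b1*b2^2*P1 - (4:ℝ)*a1^2*b1*b2*c1*P2 - (4:ℝ)*a1^2*b1*b2*c2*P1 + (2:ℝ)*a1^2*b1*c1^2*P1 + (2:ℝ)*a1^2*b1*c1*P1^2 + (2:ℝ)*a1^2*b1*c1*P2^2 + (2:ℝ)*a1^2*b1*c2^2*P1 - (1:ℝ)*a1^2*b2^4 + (2:ℝ)*a1^2*b2^3*c2 + (2:ℝ)*a1^2*b2^3*P2 - (1:ℝ)*a1^2*b2^2*c1^2 - (1:ℝ)*a1^2*b2^2*c2^2 -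 (4:ℝ)*a1^2*b2^2*c2*P2 - (1:ℝ)*a1^2*b2^2*P1^2 - (1:ℝ)*a1^2*b2^2*P2^2 + (2:ℝ)*a1^2*b2*c1^2*P2 + (2:ℝ)*a1^2*b2*c2^2*P2 + (2:ℝ)*a1^2*b2*c2*P1^2 + (2:ℝ)*a1^2*b2*c2*P2^2 - (1:ℝ)*a1^2*c1^2*P1^2 - (1:ℝ)*a1^2*c1^2*P2^2 - (1:ℝ)*a1^2*c2^2*P1^2 - (1:ℝ)*a1^2*c2^2*P2^2 + (2:ℝ)*a1*b1^5 - (2:ℝ)*a1*b1^4*c1 - (4:ℝ)*a1*b1^4*P1 + (4:ℝ)*a1*b1^3*b2^2 - (4:ℝ)*a1*b1^3*b2*c2 - (4:ℝ)*a1*b1^3*b2*P2 - (2:ℝ)*a1*b1^3*c1^2 + (4:ℝ)*a1*b1^3*c1*P1 + (2:ℝ)*a1*b1^3*c2^2 + (2:ℝ)*a1*b1^3*P1^2 + (2:ℝ)*a1*b1^3*P2^2 - (4:ℝ)*a1*b1^2*b2^2*P1 - (4:ℝ)*a1*b1^2*b2*c1*c2 + (4:ℝ)*a1*b1^2*b2*c1*P2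 + (8:ℝ)*a1*b1^2*b2*c2*P1 + (2:ℝ)*a1*b1^2*c1^3 + (4:ℝ)*a1*b1^2*c1^2*P1 + (2:ℝ)*a1*b1^2*c1*c2^2 - (2:ℝ)*a1*b1^2*c1*P1^2 - (2:ℝ)*a1*b1^2*c1*P2^2 - (4:ℝ)*a1*b1^2*c2^2*P1 + (2:ℝ)*a1*b1*b2^4 - (4:ℝ)*a1*b1*b2^3*c2 - (4:ℝ)*a1*b1*b2^3*P2 - (2:ℝ)*a1*b1*b2^2*c1^2 - (4:ℝ)*a1*b1*b2^2*c1*P1 + (2:ℝ)*a1*b1*b2^2*c2^2 + (8:ℝ)*a1*b1*b2^2*c2*P2 + (2:ℝ)*a1*b1*b2^2*P1^2 + (2:ℝ)*a1*b1*b2^2*P2^2 + (4:ℝ)*a1*b1*b2*c1^2*P2 + (8:ℝ)*a1*b1*b2*c1*c2*P1 - (4:ℝ)*a1*b1*b2*c2^2*P2 - (4:ℝ)*a1*b1*b2*c2*P1^2 - (4:ℝ)*a1*b1*b2*c2*P2^2 - (4:ℝ)*a1*b1*c1^3*P1 - (2:ℝ)*a1*b1*c1^2*P1^2 - (2:ℝ)*a1*b1*c1^2*P2^2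 - (4:ℝ)*a1*b1*c1*c2^2*P1 + (2:ℝ)*a1*b1*c2^2*P1^2 + (2:ℝ)*a1*b1*c2^2*P2^2 + (2:ℝ)*a1*b2^4*c1 - (4:ℝ)*a1*b2^3*c1*c2 - (4:ℝ)*a1*b2^3*c1*P2 + (2:ℝ)*a1*b2^2*c1^3 + (2:ℝ)*a1*b2^2*c1*c2^2 + (8:ℝ)*a1*b2^2*c1*c2*P2 + (2:ℝ)*a1*b2^2*c1*P1^2 + (2:ℝ)*a1*b2^2*c1*P2^2 - (4:ℝ)*a1*b2*c1^3*P2 - (4:ℝ)*a1*b2*c1*c2^2*P2 - (4:ℝ)*a1*b2*c1*c2*P1^2 - (4:ℝ)*a1*b2*c1*c2*P2^2 + (2:ℝ)*a1*c1^3*P1^2 + (2:ℝ)*a1*c1^3*P2^2 + (2:ℝ)*a1*c1*c2^2*P1^2 + (2:ℝ)*a1*c1*c2^2*P2^2 - (1:ℝ)*a2^2*b1^4 + (2:ℝ)*a2^2*b1^3*c1 + (2:ℝ)*a2^2*b1^3*P1 - (2:ℝ)*a2^2*b1^2*b2^2 + (2:ℝ)*a2^2*b1^2*b2*c2 + (2:ℝ)*a2^2*b1^2*b2*P2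 - (1:ℝ)*a2^2*b1^2*c1^2 - (4:ℝ)*a2^2*b1^2*c1*P1 - (1:ℝ)*a2^2*b1^2*c2^2 - (1:ℝ)*a2^2*b1^2*P1^2 - (1:ℝ)*a2^2*b1^2*P2^2 + (2:ℝ)*a2^2*b1*b2^2*c1 + (2:ℝ)*a2^2*b1*b2^2*P1 - (4:ℝ)*a2^2*b1*b2*c1*P2 - (4:ℝ)*a2^2*b1*b2*c2*P1 + (2:ℝ)*a2^2*b1*c1^2*P1 + (2:ℝ)*a2^2*b1*c1*P1^2 + (2:ℝ)*a2^2*b1*c1*P2^2 + (2:ℝ)*a2^2*b1*c2^2*P1 - (1:ℝ)*a2^2*b2^4 + (2:ℝ)*a2^2*b2^3*c2 + (2:ℝ)*a2^2*b2^3*P2 - (1:ℝ)*a2^2*b2^2*c1^2 - (1:ℝ)*a2^2*b2^2*c2^2 - (4:ℝ)*a2^2*b2^2*c2*P2 - (1:ℝ)*a2^2*b2^2*P1^2 - (1:ℝ)*a2^2*b2^2*P2^2 + (2:ℝ)*a2^2*b2*c1^2*P2 + (2:ℝ)*a2^2*b2*c2^2*P2 + (2:ℝ)*a2^2*b2*c2*P1^2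 + (2:ℝ)*a2^2*b2*c2*P2^2 - (1:ℝ)*a2^2*c1^2*P1^2 - (1:ℝ)*a2^2*c1^2*P2^2 - (1:ℝ)*a2^2*c2^2*P1^2 - (1:ℝ)*a2^2*c2^2*P2^2 + (2:ℝ)*a2*b1^4*b2 + (2:ℝ)*a2*b1^4*c2 - (4:ℝ)*a2*b1^3*b2*c1 - (4:ℝ)*a2*b1^3*b2*P1 - (4:ℝ)*a2*b1^3*c1*c2 - (4:ℝ)*a2*b1^3*c2*P1 + (4:ℝ)*a2*b1^2*b2^3 - (4:ℝ)*a2*b1^2*b2^2*P2 + (2:ℝ)*a2*b1^2*b2*c1^2 + (8:ℝ)*a2*b1^2*b2*c1*P1 - (2:ℝ)*a2*b1^2*b2*c2^2 - (4:ℝ)*a2*b1^2*b2*c2*P2 + (2:ℝ)*a2*b1^2*b2*P1^2 + (2:ℝ)*a2*b1^2*b2*P2^2 + (2:ℝ)*a2*b1^2*c1^2*c2 + (8:ℝ)*a2*b1^2*c1*c2*P1 + (2:ℝ)*a2*b1^2*c2^3 + (2:ℝ)*a2*b1^2*c2*P1^2 + (2:ℝ)*a2*b1^2*c2*P2^2 -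 (4:ℝ)*a2*b1*b2^3*c1 - (4:ℝ)*a2*b1*b2^3*P1 - (4:ℝ)*a2*b1*b2^2*c1*c2 + (8:ℝ)*a2*b1*b2^2*c1*P2 + (4:ℝ)*a2*b1*b2^2*c2*P1 - (4:ℝ)*a2*b1*b2*c1^2*P1 + (8:ℝ)*a2*b1*b2*c1*c2*P2 - (4:ℝ)*a2*b1*b2*c1*P1^2 - (4:ℝ)*a2*b1*b2*c1*P2^2 + (4:ℝ)*a2*b1*b2*c2^2*P1 - (4:ℝ)*a2*b1*c1^2*c2*P1 - (4:ℝ)*a2*b1*c1*c2*P1^2 - (4:ℝ)*a2*b1*c1*c2*P2^2 - (4:ℝ)*a2*b1*c2^3*P1 + (2:ℝ)*a2*b2^5 - (2:ℝ)*a2*b2^4*c2 - (4:ℝ)*a2*b2^4*P2 + (2:ℝ)*a2*b2^3*c1^2 - (2:ℝ)*a2*b2^3*c2^2 + (4:ℝ)*a2*b2^3*c2*P2 + (2:ℝ)*a2*b2^3*P1^2 + (2:ℝ)*a2*b2^3*P2^2 + (2:ℝ)*a2*b2^2*c1^2*c2 - (4:ℝ)*a2*b2^2*c1^2*P2 + (2:ℝ)*a2*b2^2*c2^3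 + (4:ℝ)*a2*b2^2*c2^2*P2 - (2:ℝ)*a2*b2^2*c2*P1^2 - (2:ℝ)*a2*b2^2*c2*P2^2 - (4:ℝ)*a2*b2*c1^2*c2*P2 + (2:ℝ)*a2*b2*c1^2*P1^2 + (2:ℝ)*a2*b2*c1^2*P2^2 - (4:ℝ)*a2*b2*c2^3*P2 - (2:ℝ)*a2*b2*c2^2*P1^2 - (2:ℝ)*a2*b2*c2^2*P2^2 + (2:ℝ)*a2*c1^2*c2*P1^2 + (2:ℝ)*a2*c1^2*c2*P2^2 + (2:ℝ)*a2*c2^3*P1^2 + (2:ℝ)*a2*c2^3*P2^2 - (1:ℝ)*b1^6 - (2:ℝ)*b1^5*c1 + (2:ℝ)*b1^5*P1 - (3:ℝ)*b1^4*b2^2 + (2:ℝ)*b1^4*b2*c2 + (2:ℝ)*b1^4*b2*P2 + (6:ℝ)*b1^4*c1^2 + (4:ℝ)*b1^4*c1*P1 - (2:ℝ)*b1^4*c2^2 - (1:ℝ)*b1^4*P1^2 - (1:ℝ)*b1^4*P2^2 - (1:ℝ)*b1^4*R^2 - (4:ℝ)*b1^3*b2^2*c1 + (4:ℝ)*b1^3*b2^2*P1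 + (8:ℝ)*b1^3*b2*c1*c2 + (4:ℝ)*b1^3*b2*c1*P2 - (4:ℝ)*b1^3*b2*c2*P1 - (2:ℝ)*b1^3*c1^3 - (12:ℝ)*b1^3*c1^2*P1 - (2:ℝ)*b1^3*c1*c2^2 - (2:ℝ)*b1^3*c1*P1^2 - (2:ℝ)*b1^3*c1*P2^2 + (2:ℝ)*b1^3*c1*R^2 + (4:ℝ)*b1^3*c2^2*P1 + (2:ℝ)*b1^3*P1*R^2 - (3:ℝ)*b1^2*b2^4 + (4:ℝ)*b1^2*b2^3*c2 + (4:ℝ)*b1^2*b2^3*P2 + (4:ℝ)*b1^2*b2^2*c1^2 + (4:ℝ)*b1^2*b2^2*c1*P1 - (4:ℝ)*b1^2*b2^2*c2^2 - (4:ℝ)*b1^2*b2^2*c2*P2 - (2:ℝ)*b1^2*b2^2*P1^2 - (2:ℝ)*b1^2*b2^2*P2^2 + (2:ℝ)*b1^2*b2^2*R^2 + (2:ℝ)*b1^2*b2*c1^2*c2 - (12:ℝ)*b1^2*b2*c1^2*P2 - (16:ℝ)*b1^2*b2*c1*c2*P1 + (2:ℝ)*b1^2*b2*c2^3 + (4:ℝ)*b1^2*b2*c2^2*P2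 + (2:ℝ)*b1^2*b2*c2*P1^2 + (2:ℝ)*b1^2*b2*c2*P2^2 - (6:ℝ)*b1^2*b2*c2*R^2 + (2:ℝ)*b1^2*b2*P2*R^2 - (1:ℝ)*b1^2*c1^4 + (4:ℝ)*b1^2*c1^3*P1 - (2:ℝ)*b1^2*c1^2*c2^2 + (6:ℝ)*b1^2*c1^2*P1^2 + (6:ℝ)*b1^2*c1^2*P2^2 - (1:ℝ)*b1^2*c1^2*R^2 + (4:ℝ)*b1^2*c1*c2^2*P1 - (4:ℝ)*b1^2*c1*P1*R^2 - (1:ℝ)*b1^2*c2^4 - (2:ℝ)*b1^2*c2^2*P1^2 - (2:ℝ)*b1^2*c2^2*P2^2 + (3:ℝ)*b1^2*c2^2*R^2 - (1:ℝ)*b1^2*P1^2*R^2 - (1:ℝ)*b1^2*P2^2*R^2 - (2:ℝ)*b1*b2^4*c1 + (2:ℝ)*b1*b2^4*P1 + (8:ℝ)*b1*b2^3*c1*c2 + (4:ℝ)*b1*b2^3*c1*P2 - (4:ℝ)*b1*b2^3*c2*P1 - (2:ℝ)*b1*b2^2*c1^3 + (4:ℝ)*b1*b2^2*c1^2*P1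 - (2:ℝ)*b1*b2^2*c1*c2^2 - (16:ℝ)*b1*b2^2*c1*c2*P2 - (2:ℝ)*b1*b2^2*c1*P1^2 - (2:ℝ)*b1*b2^2*c1*P2^2 + (2:ℝ)*b1*b2^2*c1*R^2 + (4:ℝ)*b1*b2^2*c2^2*P1 - (6:ℝ)*b1*b2^2*P1*R^2 + (4:ℝ)*b1*b2*c1^3*P2 - (4:ℝ)*b1*b2*c1^2*c2*P1 + (4:ℝ)*b1*b2*c1*c2^2*P2 + (8:ℝ)*b1*b2*c1*c2*P1^2 + (8:ℝ)*b1*b2*c1*c2*P2^2 - (4:ℝ)*b1*b2*c1*P2*R^2 - (4:ℝ)*b1*b2*c2^3*P1 + (12:ℝ)*b1*b2*c2*P1*R^2 + (2:ℝ)*b1*c1^4*P1 - (2:ℝ)*b1*c1^3*P1^2 - (2:ℝ)*b1*c1^3*P2^2 + (4:ℝ)*b1*c1^2*c2^2*P1 + (2:ℝ)*b1*c1^2*P1*R^2 - (2:ℝ)*b1*c1*c2^2*P1^2 - (2:ℝ)*b1*c1*c2^2*P2^2 + (2:ℝ)*b1*c1*P1^2*R^2 + (2:ℝ)*b1*c1*P2^2*R^2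 + (2:ℝ)*b1*c2^4*P1 - (6:ℝ)*b1*c2^2*P1*R^2 - (1:ℝ)*b2^6 + (2:ℝ)*b2^5*c2 + (2:ℝ)*b2^5*P2 - (2:ℝ)*b2^4*c1^2 - (2:ℝ)*b2^4*c2^2 - (4:ℝ)*b2^4*c2*P2 - (1:ℝ)*b2^4*P1^2 - (1:ℝ)*b2^4*P2^2 + (3:ℝ)*b2^4*R^2 + (2:ℝ)*b2^3*c1^2*c2 + (4:ℝ)*b2^3*c1^2*P2 + (2:ℝ)*b2^3*c2^3 + (4:ℝ)*b2^3*c2^2*P2 + (2:ℝ)*b2^3*c2*P1^2 + (2:ℝ)*b2^3*c2*P2^2 - (6:ℝ)*b2^3*c2*R^2 - (6:ℝ)*b2^3*P2*R^2 - (1:ℝ)*b2^2*c1^4 - (2:ℝ)*b2^2*c1^2*c2^2 - (4:ℝ)*b2^2*c1^2*c2*P2 - (2:ℝ)*b2^2*c1^2*P1^2 - (2:ℝ)*b2^2*c1^2*P2^2 - (1:ℝ)*b2^2*c1^2*R^2 - (1:ℝ)*b2^2*c2^4 - (4:ℝ)*b2^2*c2^3*P2 - (2:ℝ)*b2^2*c2^2*P1^2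 - (2:ℝ)*b2^2*c2^2*P2^2 + (3:ℝ)*b2^2*c2^2*R^2 + (12:ℝ)*b2^2*c2*P2*R^2 + (3:ℝ)*b2^2*P1^2*R^2 + (3:ℝ)*b2^2*P2^2*R^2 + (2:ℝ)*b2*c1^4*P2 + (4:ℝ)*b2*c1^2*c2^2*P2 + (2:ℝ)*b2*c1^2*c2*P1^2 + (2:ℝ)*b2*c1^2*c2*P2^2 + (2:ℝ)*b2*c1^2*P2*R^2 + (2:ℝ)*b2*c2^4*P2 + (2:ℝ)*b2*c2^3*P1^2 + (2:ℝ)*b2*c2^3*P2^2 - (6:ℝ)*b2*c2^2*P2*R^2 - (6:ℝ)*b2*c2*P1^2*R^2 - (6:ℝ)*b2*c2*P2^2*R^2 - (1:ℝ)*c1^4*P1^2 - (1:ℝ)*c1^4*P2^2 - (2:ℝ)*c1^2*c2^2*P1^2 - (2:ℝ)*c1^2*c2^2*P2^2 - (1:ℝ)*c1^2*P1^2*R^2 - (1:ℝ)*c1^2*P2^2*R^2 - (1:ℝ)*c2^4*P1^2 - (1:ℝ)*c2^4*P2^2 + (3:ℝ)*c2^2*P1^2*R^2 + (3:ℝ)*c2^2*P2^2*R^2)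 * ga + 
  ((0-4:ℝ)*a1*a2*b1^3*c2 - (4:ℝ)*a1*a2*b1^2*b2*c1 + (8:ℝ)*a1*a2*b1^2*c1*c2 + (8:ℝ)*a1*a2*b1^2*c2*P1 - (4:ℝ)*a1*a2*b1*b2^2*c2 + (8:ℝ)*a1*a2*b1*b2*c1^2 + (8:ℝ)*a1*a2*b1*b2*c1*P1 + (8:ℝ)*a1*a2*b1*b2*c2^2 + (8:ℝ)*a1*a2*b1*b2*c2*P2 - (8:ℝ)*a1*a2*b1*b2*R^2 - (4:ℝ)*a1*a2*b1*c1^2*c2 - (16:ℝ)*a1*a2*b1*c1*c2*P1 - (4:ℝ)*a1*a2*b1*c2^3 - (4:ℝ)*a1*a2*b1*c2*P1^2 - (4:ℝ)*a1*a2*b1*c2*P2^2 + (4:ℝ)*a1*a2*b1*c2*R^2 - (4:ℝ)*a1*a2*b2^3*c1 + (8:ℝ)*a1*a2*b2^2*c1*c2 + (8:ℝ)*a1*a2*b2^2*c1*P2 - (4:ℝ)*a1*a2*b2*c1^3 - (16:ℝ)*a1*a2*b2*c1^2*P1 - (4:ℝ)*a1*a2*b2*c1*c2^2 - (16:ℝ)*a1*a2*b2*c1*c2*P2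 - (4:ℝ)*a1*a2*b2*c1*P1^2 - (4:ℝ)*a1*a2*b2*c1*P2^2 + (4:ℝ)*a1*a2*b2*c1*R^2 - (16:ℝ)*a1*a2*b2*c2^2*P1 + (16:ℝ)*a1*a2*b2*P1*R^2 + (8:ℝ)*a1*a2*c1^2*c2*P1 + (8:ℝ)*a1*a2*c1*c2*P1^2 + (8:ℝ)*a1*a2*c1*c2*P2^2 + (8:ℝ)*a1*a2*c2^3*P1 - (8:ℝ)*a1*a2*c2*P1*R^2 + (2:ℝ)*a1*b1^4*c1 - (2:ℝ)*a1*b1^3*c1^2 - (4:ℝ)*a1*b1^3*c1*P1 + (2:ℝ)*a1*b1^3*c2^2 + (2:ℝ)*a1*b1^3*R^2 + (4:ℝ)*a1*b1^2*b2^2*c1 - (4:ℝ)*a1*b1^2*b2*c1*c2 - (4:ℝ)*a1*b1^2*b2*c1*P2 - (2:ℝ)*a1*b1^2*c1^3 + (4:ℝ)*a1*b1^2*c1^2*P1 - (2:ℝ)*a1*b1^2*c1*c2^2 + (2:ℝ)*a1*b1^2*c1*P1^2 + (2:ℝ)*a1*b1^2*c1*P2^2 - (4:ℝ)*a1*b1^2*c2^2*P1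 - (4:ℝ)*a1*b1^2*P1*R^2 - (2:ℝ)*a1*b1*b2^2*c1^2 - (4:ℝ)*a1*b1*b2^2*c1*P1 + (2:ℝ)*a1*b1*b2^2*c2^2 + (2:ℝ)*a1*b1*b2^2*R^2 - (4:ℝ)*a1*b1*b2*c1^2*c2 + (4:ℝ)*a1*b1*b2*c1^2*P2 + (8:ℝ)*a1*b1*b2*c1*c2*P1 - (4:ℝ)*a1*b1*b2*c2^3 - (4:ℝ)*a1*b1*b2*c2^2*P2 + (4:ℝ)*a1*b1*b2*c2*R^2 - (4:ℝ)*a1*b1*b2*P2*R^2 + (2:ℝ)*a1*b1*c1^4 + (4:ℝ)*a1*b1*c1^3*P1 + (4:ℝ)*a1*b1*c1^2*c2^2 - (2:ℝ)*a1*b1*c1^2*P1^2 - (2:ℝ)*a1*b1*c1^2*P2^2 - (4:ℝ)*a1*b1*c1^2*R^2 + (4:ℝ)*a1*b1*c1*c2^2*P1 + (2:ℝ)*a1*b1*c2^4 + (2:ℝ)*a1*b1*c2^2*P1^2 + (2:ℝ)*a1*b1*c2^2*P2^2 - (4:ℝ)*a1*b1*c2^2*R^2 + (2:ℝ)*a1*b1*P1^2*R^2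 + (2:ℝ)*a1*b1*P2^2*R^2 + (2:ℝ)*a1*b1*R^4 + (2:ℝ)*a1*b2^4*c1 - (4:ℝ)*a1*b2^3*c1*c2 - (4:ℝ)*a1*b2^3*c1*P2 + (2:ℝ)*a1*b2^2*c1^3 + (2:ℝ)*a1*b2^2*c1*c2^2 + (8:ℝ)*a1*b2^2*c1*c2*P2 + (2:ℝ)*a1*b2^2*c1*P1^2 + (2:ℝ)*a1*b2^2*c1*P2^2 - (4:ℝ)*a1*b2^2*c1*R^2 + (4:ℝ)*a1*b2*c1^3*P2 + (8:ℝ)*a1*b2*c1^2*c2*P1 + (4:ℝ)*a1*b2*c1*c2^2*P2 - (4:ℝ)*a1*b2*c1*c2*P1^2 - (4:ℝ)*a1*b2*c1*c2*P2^2 + (8:ℝ)*a1*b2*c2^3*P1 - (8:ℝ)*a1*b2*c2*P1*R^2 - (4:ℝ)*a1*c1^4*P1 - (2:ℝ)*a1*c1^3*P1^2 - (2:ℝ)*a1*c1^3*P2^2 - (8:ℝ)*a1*c1^2*c2^2*P1 + (8:ℝ)*a1*c1^2*P1*R^2 - (2:ℝ)*a1*c1*c2^2*P1^2 - (2:ℝ)*a1*c1*c2^2*P2^2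 - (4:ℝ)*a1*c2^4*P1 + (8:ℝ)*a1*c2^2*P1*R^2 - (4:ℝ)*a1*P1*R^4 + (4:ℝ)*a2^2*b1^3*c1 - (4:ℝ)*a2^2*b1^2*b2*c2 - (8:ℝ)*a2^2*b1^2*c1^2 - (8:ℝ)*a2^2*b1^2*c1*P1 + (4:ℝ)*a2^2*b1^2*R^2 + (4:ℝ)*a2^2*b1*b2^2*c1 - (8:ℝ)*a2^2*b1*b2*c1*P2 + (8:ℝ)*a2^2*b1*b2*c2*P1 + (4:ℝ)*a2^2*b1*c1^3 + (16:ℝ)*a2^2*b1*c1^2*P1 + (4:ℝ)*a2^2*b1*c1*c2^2 + (4:ℝ)*a2^2*b1*c1*P1^2 + (4:ℝ)*a2^2*b1*c1*P2^2 - (4:ℝ)*a2^2*b1*c1*R^2 - (8:ℝ)*a2^2*b1*P1*R^2 - (4:ℝ)*a2^2*b2^3*c2 + (8:ℝ)*a2^2*b2^2*c2^2 + (8:ℝ)*a2^2*b2^2*c2*P2 - (4:ℝ)*a2^2*b2^2*R^2 - (4:ℝ)*a2^2*b2*c1^2*c2 + (16:ℝ)*a2^2*b2*c1^2*P2 - (4:ℝ)*a2^2*b2*c2^3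 - (4:ℝ)*a2^2*b2*c2*P1^2 - (4:ℝ)*a2^2*b2*c2*P2^2 + (4:ℝ)*a2^2*b2*c2*R^2 - (8:ℝ)*a2^2*b2*P2*R^2 - (8:ℝ)*a2^2*c1^3*P1 - (8:ℝ)*a2^2*c1^2*P1^2 - (8:ℝ)*a2^2*c1^2*P2^2 - (4:ℝ)*a2^2*c1^2*R^2 - (8:ℝ)*a2^2*c1*c2^2*P1 + (8:ℝ)*a2^2*c1*P1*R^2 - (4:ℝ)*a2^2*c2^2*R^2 + (4:ℝ)*a2^2*P1^2*R^2 + (4:ℝ)*a2^2*P2^2*R^2 + (4:ℝ)*a2^2*R^4 + (2:ℝ)*a2*b1^4*c2 - (4:ℝ)*a2*b1^3*c1*c2 - (4:ℝ)*a2*b1^3*c2*P1 + (4:ℝ)*a2*b1^2*b2^2*c2 + (2:ℝ)*a2*b1^2*b2*c1^2 - (2:ℝ)*a2*b1^2*b2*c2^2 - (4:ℝ)*a2*b1^2*b2*c2*P2 + (2:ℝ)*a2*b1^2*b2*R^2 + (2:ℝ)*a2*b1^2*c1^2*c2 + (8:ℝ)*a2*b1^2*c1*c2*P1 + (2:ℝ)*a2*b1^2*c2^3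 + (2:ℝ)*a2*b1^2*c2*P1^2 + (2:ℝ)*a2*b1^2*c2*P2^2 - (4:ℝ)*a2*b1^2*c2*R^2 - (4:ℝ)*a2*b1*b2^2*c1*c2 - (4:ℝ)*a2*b1*b2^2*c2*P1 - (4:ℝ)*a2*b1*b2*c1^3 - (4:ℝ)*a2*b1*b2*c1^2*P1 - (4:ℝ)*a2*b1*b2*c1*c2^2 + (8:ℝ)*a2*b1*b2*c1*c2*P2 + (4:ℝ)*a2*b1*b2*c1*R^2 + (4:ℝ)*a2*b1*b2*c2^2*P1 - (4:ℝ)*a2*b1*b2*P1*R^2 - (4:ℝ)*a2*b1*c1^2*c2*P1 - (4:ℝ)*a2*b1*c1*c2*P1^2 - (4:ℝ)*a2*b1*c1*c2*P2^2 - (4:ℝ)*a2*b1*c2^3*P1 + (8:ℝ)*a2*b1*c2*P1*R^2 + (2:ℝ)*a2*b2^4*c2 + (2:ℝ)*a2*b2^3*c1^2 - (2:ℝ)*a2*b2^3*c2^2 - (4:ℝ)*a2*b2^3*c2*P2 + (2:ℝ)*a2*b2^3*R^2 - (2:ℝ)*a2*b2^2*c1^2*c2 - (4:ℝ)*a2*b2^2*c1^2*P2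 - (2:ℝ)*a2*b2^2*c2^3 + (4:ℝ)*a2*b2^2*c2^2*P2 + (2:ℝ)*a2*b2^2*c2*P1^2 + (2:ℝ)*a2*b2^2*c2*P2^2 - (4:ℝ)*a2*b2^2*P2*R^2 + (2:ℝ)*a2*b2*c1^4 + (8:ℝ)*a2*b2*c1^3*P1 + (4:ℝ)*a2*b2*c1^2*c2^2 - (4:ℝ)*a2*b2*c1^2*c2*P2 + (2:ℝ)*a2*b2*c1^2*P1^2 + (2:ℝ)*a2*b2*c1^2*P2^2 - (4:ℝ)*a2*b2*c1^2*R^2 + (8:ℝ)*a2*b2*c1*c2^2*P1 - (8:ℝ)*a2*b2*c1*P1*R^2 + (2:ℝ)*a2*b2*c2^4 - (4:ℝ)*a2*b2*c2^3*P2 - (2:ℝ)*a2*b2*c2^2*P1^2 - (2:ℝ)*a2*b2*c2^2*P2^2 - (4:ℝ)*a2*b2*c2^2*R^2 + (8:ℝ)*a2*b2*c2*P2*R^2 + (2:ℝ)*a2*b2*P1^2*R^2 + (2:ℝ)*a2*b2*P2^2*R^2 + (2:ℝ)*a2*b2*R^4 + (2:ℝ)*a2*c1^2*c2*P1^2 +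 (2:ℝ)*a2*c1^2*c2*P2^2 + (4:ℝ)*a2*c1^2*c2*R^2 + (2:ℝ)*a2*c2^3*P1^2 + (2:ℝ)*a2*c2^3*P2^2 + (4:ℝ)*a2*c2^3*R^2 - (4:ℝ)*a2*c2*P1^2*R^2 - (4:ℝ)*a2*c2*P2^2*R^2 - (4:ℝ)*a2*c2*R^4 - (1:ℝ)*b1^4*c1^2 - (1:ℝ)*b1^4*c2^2 - (1:ℝ)*b1^4*R^2 + (2:ℝ)*b1^3*c1^3 + (2:ℝ)*b1^3*c1^2*P1 + (2:ℝ)*b1^3*c1*c2^2 - (2:ℝ)*b1^3*c1*R^2 + (2:ℝ)*b1^3*c2^2*P1 + (2:ℝ)*b1^3*P1*R^2 - (2:ℝ)*b1^2*b2^2*c1^2 - (2:ℝ)*b1^2*b2^2*c2^2 - (2:ℝ)*b1^2*b2^2*R^2 + (2:ℝ)*b1^2*b2*c1^2*c2 + (2:ℝ)*b1^2*b2*c1^2*P2 + (2:ℝ)*b1^2*b2*c2^3 + (2:ℝ)*b1^2*b2*c2^2*P2 + (2:ℝ)*b1^2*b2*c2*R^2 + (2:ℝ)*b1^2*b2*P2*R^2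 - (1:ℝ)*b1^2*c1^4 - (4:ℝ)*b1^2*c1^3*P1 - (2:ℝ)*b1^2*c1^2*c2^2 - (1:ℝ)*b1^2*c1^2*P1^2 - (1:ℝ)*b1^2*c1^2*P2^2 + (5:ℝ)*b1^2*c1^2*R^2 - (4:ℝ)*b1^2*c1*c2^2*P1 + (4:ℝ)*b1^2*c1*P1*R^2 - (1:ℝ)*b1^2*c2^4 - (1:ℝ)*b1^2*c2^2*P1^2 - (1:ℝ)*b1^2*c2^2*P2^2 + b1^2*c2^2*R^2 - (1:ℝ)*b1^2*P1^2*R^2 - (1:ℝ)*b1^2*P2^2*R^2 - (2:ℝ)*b1^2*R^4 + (2:ℝ)*b1*b2^2*c1^3 + (2:ℝ)*b1*b2^2*c1^2*P1 + (2:ℝ)*b1*b2^2*c1*c2^2 - (2:ℝ)*b1*b2^2*c1*R^2 + (2:ℝ)*b1*b2^2*c2^2*P1 + (2:ℝ)*b1*b2^2*P1*R^2 - (4:ℝ)*b1*b2*c1^3*P2 - (4:ℝ)*b1*b2*c1^2*c2*P1 - (4:ℝ)*b1*b2*c1*c2^2*P2 + (4:ℝ)*b1*b2*c1*P2*R^2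 - (4:ℝ)*b1*b2*c2^3*P1 - (4:ℝ)*b1*b2*c2*P1*R^2 + (2:ℝ)*b1*c1^4*P1 + (2:ℝ)*b1*c1^3*P1^2 + (2:ℝ)*b1*c1^3*P2^2 + (4:ℝ)*b1*c1^2*c2^2*P1 - (10:ℝ)*b1*c1^2*P1*R^2 + (2:ℝ)*b1*c1*c2^2*P1^2 + (2:ℝ)*b1*c1*c2^2*P2^2 - (2:ℝ)*b1*c1*P1^2*R^2 - (2:ℝ)*b1*c1*P2^2*R^2 + (2:ℝ)*b1*c2^4*P1 - (2:ℝ)*b1*c2^2*P1*R^2 + (4:ℝ)*b1*P1*R^4 - (1:ℝ)*b2^4*c1^2 - (1:ℝ)*b2^4*c2^2 - (1:ℝ)*b2^4*R^2 + (2:ℝ)*b2^3*c1^2*c2 + (2:ℝ)*b2^3*c1^2*P2 + (2:ℝ)*b2^3*c2^3 + (2:ℝ)*b2^3*c2^2*P2 + (2:ℝ)*b2^3*c2*R^2 + (2:ℝ)*b2^3*P2*R^2 - (1:ℝ)*b2^2*c1^4 - (2:ℝ)*b2^2*c1^2*c2^2 - (4:ℝ)*b2^2*c1^2*c2*P2 -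 (1:ℝ)*b2^2*c1^2*P1^2 - (1:ℝ)*b2^2*c1^2*P2^2 + b2^2*c1^2*R^2 - (1:ℝ)*b2^2*c2^4 - (4:ℝ)*b2^2*c2^3*P2 - (1:ℝ)*b2^2*c2^2*P1^2 - (1:ℝ)*b2^2*c2^2*P2^2 - (3:ℝ)*b2^2*c2^2*R^2 - (4:ℝ)*b2^2*c2*P2*R^2 - (1:ℝ)*b2^2*P1^2*R^2 - (1:ℝ)*b2^2*P2^2*R^2 + (2:ℝ)*b2^2*R^4 + (2:ℝ)*b2*c1^4*P2 + (4:ℝ)*b2*c1^2*c2^2*P2 + (2:ℝ)*b2*c1^2*c2*P1^2 + (2:ℝ)*b2*c1^2*c2*P2^2 + (4:ℝ)*b2*c1^2*c2*R^2 - (10:ℝ)*b2*c1^2*P2*R^2 + (2:ℝ)*b2*c2^4*P2 + (2:ℝ)*b2*c2^3*P1^2 + (2:ℝ)*b2*c2^3*P2^2 + (4:ℝ)*b2*c2^3*R^2 - (2:ℝ)*b2*c2^2*P2*R^2 + (2:ℝ)*b2*c2*P1^2*R^2 + (2:ℝ)*b2*c2*P2^2*R^2 - (4:ℝ)*b2*c2*R^4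 + (4:ℝ)*b2*P2*R^4 - (1:ℝ)*c1^4*P1^2 - (1:ℝ)*c1^4*P2^2 - (2:ℝ)*c1^4*R^2 - (2:ℝ)*c1^2*c2^2*P1^2 - (2:ℝ)*c1^2*c2^2*P2^2 - (4:ℝ)*c1^2*c2^2*R^2 + (5:ℝ)*c1^2*P1^2*R^2 + (5:ℝ)*c1^2*P2^2*R^2 + (4:ℝ)*c1^2*R^4 - (1:ℝ)*c2^4*P1^2 - (1:ℝ)*c2^4*P2^2 - (2:ℝ)*c2^4*R^2 + c2^2*P1^2*R^2 + c2^2*P2^2*R^2 + (4:ℝ)*c2^2*R^4 - (2:ℝ)*P1^2*R^4 - (2:ℝ)*P2^2*R^4 - (2:ℝ)*R^6) * gb + 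
  ((0-16:ℝ)*a1*a2*b1*b2^2*P2 + (8:ℝ)*a1*a2*b1*b2*c1*P1 + (8:ℝ)*a1*a2*b1*b2*c2*P2 + (8:ℝ)*a1*a2*b1*b2*P1^2 + (8:ℝ)*a1*a2*b1*b2*P2^2 + (8:ℝ)*a1*a2*b1*b2*R^2 - (4:ℝ)*a1*a2*b1*c2*P1^2 - (4:ℝ)*a1*a2*b1*c2*P2^2 - (4:ℝ)*a1*a2*b1*c2*R^2 + (16:ℝ)*a1*a2*b2^3*P1 + (8:ℝ)*a1*a2*b2^2*c1*P2 - (8:ℝ)*a1*a2*b2^2*c2*P1 - (4:ℝ)*a1*a2*b2*c1*P1^2 - (4:ℝ)*a1*a2*b2*c1*P2^2 - (4:ℝ)*a1*a2*b2*c1*R^2 - (16:ℝ)*a1*a2*b2*P1*R^2 + (8:ℝ)*a1*a2*c2*P1*R^2 - (8:ℝ)*a1*b1*b2^2*c1*P1 + (8:ℝ)*a1*b1*b2^2*c2*P2 - (4:ℝ)*a1*b1*b2*c1^2*P2 - (4:ℝ)*a1*b1*b2*c2^2*P2 - (4:ℝ)*a1*b1*b2*c2*P1^2 - (4:ℝ)*a1*b1*b2*c2*P2^2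 - (4:ℝ)*a1*b1*b2*c2*R^2 + (4:ℝ)*a1*b1*b2*P2*R^2 + (2:ℝ)*a1*b1*c1^2*P1^2 + (2:ℝ)*a1*b1*c1^2*P2^2 + (2:ℝ)*a1*b1*c1^2*R^2 + (2:ℝ)*a1*b1*c2^2*P1^2 + (2:ℝ)*a1*b1*c2^2*P2^2 + (2:ℝ)*a1*b1*c2^2*R^2 - (2:ℝ)*a1*b1*P1^2*R^2 - (2:ℝ)*a1*b1*P2^2*R^2 - (2:ℝ)*a1*b1*R^4 - (8:ℝ)*a1*b2^3*c1*P2 - (8:ℝ)*a1*b2^3*c2*P1 + (4:ℝ)*a1*b2^2*c1^2*P1 + (4:ℝ)*a1*b2^2*c1*P1^2 + (4:ℝ)*a1*b2^2*c1*P2^2 + (4:ℝ)*a1*b2^2*c1*R^2 + (4:ℝ)*a1*b2^2*c2^2*P1 - (4:ℝ)*a1*b2^2*P1*R^2 + (8:ℝ)*a1*b2*c2*P1*R^2 - (4:ℝ)*a1*c1^2*P1*R^2 - (4:ℝ)*a1*c2^2*P1*R^2 + (4:ℝ)*a1*P1*R^4 - (16:ℝ)*a2^2*b1*b2^2*P1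 - (8:ℝ)*a2^2*b1*b2*c1*P2 + (8:ℝ)*a2^2*b1*b2*c2*P1 + (4:ℝ)*a2^2*b1*c1*P1^2 + (4:ℝ)*a2^2*b1*c1*P2^2 + (4:ℝ)*a2^2*b1*c1*R^2 + (8:ℝ)*a2^2*b1*P1*R^2 - (16:ℝ)*a2^2*b2^3*P2 + (8:ℝ)*a2^2*b2^2*c1*P1 + (8:ℝ)*a2^2*b2^2*c2*P2 + (8:ℝ)*a2^2*b2^2*P1^2 + (8:ℝ)*a2^2*b2^2*P2^2 + (8:ℝ)*a2^2*b2^2*R^2 - (4:ℝ)*a2^2*b2*c2*P1^2 - (4:ℝ)*a2^2*b2*c2*P2^2 - (4:ℝ)*a2^2*b2*c2*R^2 + (8:ℝ)*a2^2*b2*P2*R^2 - (8:ℝ)*a2^2*c1*P1*R^2 - (4:ℝ)*a2^2*P1^2*R^2 - (4:ℝ)*a2^2*P2^2*R^2 - (4:ℝ)*a2^2*R^4 + (8:ℝ)*a2*b1*b2^2*c1*P2 + (8:ℝ)*a2*b1*b2^2*c2*P1 - (4:ℝ)*a2*b1*b2*c1^2*P1 - (4:ℝ)*a2*b1*b2*c1*P1^2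 - (4:ℝ)*a2*b1*b2*c1*P2^2 - (4:ℝ)*a2*b1*b2*c1*R^2 - (4:ℝ)*a2*b1*b2*c2^2*P1 + (4:ℝ)*a2*b1*b2*P1*R^2 - (8:ℝ)*a2*b1*c2*P1*R^2 - (8:ℝ)*a2*b2^3*c1*P1 + (8:ℝ)*a2*b2^3*c2*P2 - (4:ℝ)*a2*b2^2*c1^2*P2 - (4:ℝ)*a2*b2^2*c2^2*P2 - (4:ℝ)*a2*b2^2*c2*P1^2 - (4:ℝ)*a2*b2^2*c2*P2^2 - (4:ℝ)*a2*b2^2*c2*R^2 + (4:ℝ)*a2*b2^2*P2*R^2 + (2:ℝ)*a2*b2*c1^2*P1^2 + (2:ℝ)*a2*b2*c1^2*P2^2 + (2:ℝ)*a2*b2*c1^2*R^2 + (8:ℝ)*a2*b2*c1*P1*R^2 + (2:ℝ)*a2*b2*c2^2*P1^2 + (2:ℝ)*a2*b2*c2^2*P2^2 + (2:ℝ)*a2*b2*c2^2*R^2 - (8:ℝ)*a2*b2*c2*P2*R^2 - (2:ℝ)*a2*b2*P1^2*R^2 - (2:ℝ)*a2*b2*P2^2*R^2 - (2:ℝ)*a2*b2*R^4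 + (4:ℝ)*a2*c2*P1^2*R^2 + (4:ℝ)*a2*c2*P2^2*R^2 + (4:ℝ)*a2*c2*R^4 + (8:ℝ)*b1*b2^2*P1*R^2 - (8:ℝ)*b1*b2*c2*P1*R^2 + (4:ℝ)*b1*c1^2*P1*R^2 + (4:ℝ)*b1*c2^2*P1*R^2 - (4:ℝ)*b1*P1*R^4 + (8:ℝ)*b2^3*P2*R^2 - (8:ℝ)*b2^2*c2*P2*R^2 - (4:ℝ)*b2^2*P1^2*R^2 - (4:ℝ)*b2^2*P2^2*R^2 - (4:ℝ)*b2^2*R^4 + (4:ℝ)*b2*c1^2*P2*R^2 + (4:ℝ)*b2*c2^2*P2*R^2 + (4:ℝ)*b2*c2*P1^2*R^2 + (4:ℝ)*b2*c2*P2^2*R^2 + (4:ℝ)*b2*c2*R^4 - (4:ℝ)*b2*P2*R^4 - (2:ℝ)*c1^2*P1^2*R^2 - (2:ℝ)*c1^2*P2^2*R^2 - (2:ℝ)*c1^2*R^4 - (2:ℝ)*c2^2*P1^2*R^2 - (2:ℝ)*c2^2*P2^2*R^2 - (2:ℝ)*c2^2*R^4 + (2:ℝ)*P1^2*R^4 +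 (2:ℝ)*P2^2*R^4 + (2:ℝ)*R^6) * gc

/-- Pedal sidelength formula.  Let `P` be a point and `p₀, p₁, p₂` be
pairwise distinct points on a circle of radius `R` centered at `O`.  If `q₁` is the
foot of the perpendicular from `P` to line `p₀p₁` and `q₂` the foot of the
perpendicular from `P` to line `p₁p₂`, then
`dist q₂ q₁ = dist p₀ p₂ * dist P p₁ / (2R)`. -/
theorem pedal_sidelength
    (O P p₀ p₁ p₂ q₁ q₂ : EuclideanSpace ℝ (Fin 2)) (R : ℝ) (hR : 0 < R)
    (h₀ : dist O p₀ = R) (h₁ : dist O p₁ = R) (h₂ : dist O p₂ = R)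
    (h01 : p₀ ≠ p₁) (h12 : p₁ ≠ p₂) (h02 : p₀ ≠ p₂)
    (hq₁mem : q₁ ∈ affineSpan ℝ ({p₀, p₁} : Set (EuclideanSpace ℝ (Fin 2))))
    (hq₁perp : (inner ℝ (P - q₁) (p₁ - p₀) : ℝ) = 0)
    (hq₂mem : q₂ ∈ affineSpan ℝ ({p₁, p₂} : Set (EuclideanSpace ℝ (Fin 2))))
    (hq₂perp : (inner ℝ (P - q₂) (p₂ - p₁) : ℝ) = 0) :
    dist q₂ q₁ = dist p₀ p₂ * dist P p₁ / (2 * R) := by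
  have dist_sq : ∀ x y : EuclideanSpace ℝ (Fin 2),
      dist x y ^ 2 = (x 0 - y 0) ^ 2 + (x 1 - y 1) ^ 2 := by
    intro x y
    rw [EuclideanSpace.dist_eq, Real.sq_sqrt (Finset.sum_nonneg fun i _ => sq_nonneg _),
      Fin.sum_univ_two, Real.dist_eq, Real.dist_eq, sq_abs, sq_abs]
  have inner_eq : ∀ x y : EuclideanSpace ℝ (Fin 2),
      (inner ℝ x y : ℝ) = x 0 * y 0 + x 1 * y 1 := by
    intro x y
    simp [PiLp.inner_apply, Fin.sum_univ_two, RCLike.inner_apply, conj_trivial, mul_comm]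
  have hq1' : (q₁ -ᵥ p₀) +ᵥ p₀ ∈ line[ℝ, p₀, p₁] := by simpa using hq₁mem
  obtain ⟨t, ht⟩ := vadd_left_mem_affineSpan_pair.mp hq1'
  have hq2' : (q₂ -ᵥ p₁) +ᵥ p₁ ∈ line[ℝ, p₁, p₂] := by simpa using hq₂mem
  obtain ⟨s, hs⟩ := vadd_left_mem_affineSpan_pair.mp hq2'
  have hq10 : q₁ 0 = p₀ 0 + t * (p₁ 0 - p₀ 0) := by
    have h := congrArg (fun v : EuclideanSpace ℝ (Fin 2) => v 0) ht
    simp only [vsub_eq_sub, PiLp.smul_apply, PiLp.sub_apply, smul_eq_mul] at h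
    linarith
  have hq11 : q₁ 1 = p₀ 1 + t * (p₁ 1 - p₀ 1) := by
    have h := congrArg (fun v : EuclideanSpace ℝ (Fin 2) => v 1) ht
    simp only [vsub_eq_sub, PiLp.smul_apply, PiLp.sub_apply, smul_eq_mul] at h
    linarith
  have hq20 : q₂ 0 = p₁ 0 + s * (p₂ 0 - p₁ 0) := by
    have h := congrArg (fun v : EuclideanSpace ℝ (Fin 2) => v 0) hs
    simp only [vsub_eq_sub, PiLp.smul_apply, PiLp.sub_apply, smul_eq_mul] at h
    linarith
  have hq21 : q₂ 1 = p₁ 1 + s * (p₂ 1 - p₁ 1) := by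
    have h := congrArg (fun v : EuclideanSpace ℝ (Fin 2) => v 1) hs
    simp only [vsub_eq_sub, PiLp.smul_apply, PiLp.sub_apply, smul_eq_mul] at h
    linarith
  have ga : (p₀ 0 - O 0) ^ 2 + (p₀ 1 - O 1) ^ 2 = R ^ 2 := by
    have h := dist_sq O p₀; rw [h₀] at h; linear_combination -h
  have gb : (p₁ 0 - O 0) ^ 2 + (p₁ 1 - O 1) ^ 2 = R ^ 2 := by
    have h := dist_sq O p₁; rw [h₁] at h; linear_combination -h
  have gc : (p₂ 0 - O 0) ^ 2 + (p₂ 1 - O 1) ^ 2 = R ^ 2 := by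
    have h := dist_sq O p₂; rw [h₂] at h; linear_combination -h
  have hperp1 : (P 0 - q₁ 0) * (p₁ 0 - p₀ 0) + (P 1 - q₁ 1) * (p₁ 1 - p₀ 1) = 0 := by
    have h := hq₁perp; rw [inner_eq] at h
    simpa only [PiLp.sub_apply] using h
  have hperp2 : (P 0 - q₂ 0) * (p₂ 0 - p₁ 0) + (P 1 - q₂ 1) * (p₂ 1 - p₁ 1) = 0 := by
    have h := hq₂perp; rw [inner_eq] at h
    simpa only [PiLp.sub_apply] using h
  have ht' : ((P 0 - O 0) - ((p₀ 0 - O 0) + t * ((p₁ 0 - O 0) - (p₀ 0 - O 0)))) * ((p₁ 0 - O 0) - (p₀ 0 - O 0))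
      + ((P 1 - O 1) - ((p₀ 1 - O 1) + t * ((p₁ 1 - O 1) - (p₀ 1 - O 1)))) * ((p₁ 1 - O 1) - (p₀ 1 - O 1)) = 0 := by
    rw [hq10, hq11] at hperp1; linear_combination hperp1
  have hs' : ((P 0 - O 0) - ((p₁ 0 - O 0) + s * ((p₂ 0 - O 0) - (p₁ 0 - O 0)))) * ((p₂ 0 - O 0) - (p₁ 0 - O 0))
      + ((P 1 - O 1) - ((p₁ 1 - O 1) + s * ((p₂ 1 - O 1) - (p₁ 1 - O 1)))) * ((p₂ 1 - O 1) - (p₁ 1 - O 1)) = 0 := by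
    rw [hq20, hq21] at hperp2; linear_combination hperp2
  have key := key_poly t s (p₀ 0 - O 0) (p₀ 1 - O 1) (p₁ 0 - O 0) (p₁ 1 - O 1)
    (p₂ 0 - O 0) (p₂ 1 - O 1) (P 0 - O 0) (P 1 - O 1) R ga gb gc ht' hs'
  have hU : dist p₀ p₁ ^ 2 ≠ 0 := pow_ne_zero _ (dist_ne_zero.mpr h01)
  have hV : dist p₁ p₂ ^ 2 ≠ 0 := pow_ne_zero _ (dist_ne_zero.mpr h12)
  have hUV : dist p₀ p₁ ^ 2 * dist p₁ p₂ ^ 2 ≠ 0 := mul_ne_zero hU hV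
  have h2 : (dist q₂ q₁ ^ 2 * (4 * R ^ 2)) * (dist p₀ p₁ ^ 2 * dist p₁ p₂ ^ 2)
      = (dist p₀ p₂ ^ 2 * dist P p₁ ^ 2) * (dist p₀ p₁ ^ 2 * dist p₁ p₂ ^ 2) := by
    rw [dist_sq q₂ q₁, dist_sq p₀ p₂, dist_sq P p₁, dist_sq p₀ p₁, dist_sq p₁ p₂,
      hq10, hq11, hq20, hq21]
    linear_combination key
  have h3 := mul_right_cancel₀ hUV h2
  have hD : dist q₂ q₁ ^ 2 = (dist p₀ p₂ * dist P p₁ / (2 * R)) ^ 2 := by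
    rw [div_pow, eq_div_iff (by positivity)]
    linear_combination h3
  calc dist q₂ q₁ = Real.sqrt (dist q₂ q₁ ^ 2) := (Real.sqrt_sq dist_nonneg).symm
    _ = Real.sqrt ((dist p₀ p₂ * dist P p₁ / (2 * R)) ^ 2) := by rw [hD]
    _ = dist p₀ p₂ * dist P p₁ / (2 * R) := Real.sqrt_sq (by positivity)
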